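/- Let G be a k-hypergraph of dimension d, let 0 ≤ m ≤ k, and let a, b ∈ ℤ^d. If there exist an (m,a)-simple k-hypergraph and an (m,b)-simple k-hypergraph that are elements of Σ_ℤ(Eqs({G})), then there exists an (m, a+b)-simple k-hypergraph that is an element of Σ_ℤ(Eqs({G})). -/

import Mathlib

/-- A hypergraph (of dimension `d`) over the data domain `ℕ`, represented by its
weight function: a finitely supported function from finite sets of data values
(potential hyperedges) to weight vectors in `ℤ^d`.  Isolated vertices are
irrelevant (hypergraphs are identified up to isolated vertices). -/
abbrev HG (d : ℕ) := (Finset ℕ) →₀ (Fin d → ℤ)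

/-- `H` is a `k`-hypergraph: every hyperedge (set with nonzero weight) has `k` elements. -/
def IsHG (k : ℕ) {d : ℕ} (H : HG d) : Prop := ∀ e ∈ H.support, e.card = k

/-- The (non-isolated) vertices of `H`: the union of its hyperedges. -/
def verts {d : ℕ} (H : HG d) : Finset ℕ := H.support.sup id

/-- The weight `w_X(H)` of a finite set `X`: the sum of the weights of all
hyperedges of `H` that contain `X`. -/
def weight {d : ℕ} (X : Finset ℕ) (H : HG d) : Fin d → ℤ :=
  ∑ e ∈ H.support.filter (fun e => X ⊆ e), H e
/-- Two hypergraphs are equivalent if (after discarding isolated vertices) they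
differ by a permutation of the data domain. -/
def HGEquiv {d : ℕ} (H₁ H₂ : HG d) : Prop :=
  ∃ π : ℕ ≃ ℕ, ∀ e : Finset ℕ, H₂ (e.image π) = H₁ e

/-- All hypergraphs equivalent to a member of the family `𝒢`. -/
def Eqs {d : ℕ} (𝒢 : Set (HG d)) : Set (HG d) := {H | ∃ G ∈ 𝒢, HGEquiv G H}

/-- `Σ_ℤ(𝒢)`: all finite `ℤ`-linear combinations of members of `𝒢`. -/
def Zsum {d : ℕ} (𝒢 : Set (HG d)) : Set (HG d) :=
  {H | ∃ (l : ℕ) (c : Fin l → ℤ) (F : Fin l → HG d),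
      (∀ i, F i ∈ 𝒢) ∧ H = ∑ i, c i • F i}
/-- `G` is an `(m, a)`-simple `k`-hypergraph:
its vertex set is (contained in) a disjoint union `A ∪ B ∪ C` with
`A = {α₁, …, α_m}`, `B = {β₁, …, β_m}` and `|C| = 2(k−m) − 1`
(`C = ∅` when `m = k`), such that
`w_X(G) = (−1)^{|B ∩ X|} · a` for every `X = {x₁, …, x_m}` with
`x_i ∈ {α_i, β_i}` for each `i`, `w_X(G) = 0` for every other `m`-element set
`X` of vertices, and `w_X(G) = 0` for every set `X` of vertices with
`|X| < m`. -/
def IsSimple {d : ℕ} (k m : ℕ) (a : Fin d → ℤ) (G : HG d) : Prop :=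
  ∃ (A B C : Finset ℕ) (α β : Fin m → ℕ),
    Function.Injective α ∧ Function.Injective β ∧
    A = Finset.image α Finset.univ ∧ B = Finset.image β Finset.univ ∧
    Disjoint A B ∧ Disjoint A C ∧ Disjoint B C ∧
    C.card = 2 * (k - m) - 1 ∧
    verts G ⊆ A ∪ B ∪ C ∧
    (∀ χ : Fin m → Bool,
      weight (Finset.image (fun i => if χ i then β i else α i) Finset.univ) G
        = ((-1 : ℤ) ^ (Finset.univ.filter (fun i => χ i = true)).card) • a) ∧
    (∀ X : Finset ℕ, X ⊆ A ∪ B ∪ C → X.card = m →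
        (∀ χ : Fin m → Bool,
          X ≠ Finset.image (fun i => if χ i then β i else α i) Finset.univ) →
        weight X G = 0) ∧
    (∀ X : Finset ℕ, X ⊆ A ∪ B ∪ C → X.card < m → weight X G = 0)

/-- `S` is a simplification of the family `𝒢`: for every `0 ≤ m ≤ k` and every
vector `g` in the `ℤ`-span of the weights of `m`-element sets of vertices of
members of `𝒢`, the family `S` contains an `(m, g)`-simple `k`-hypergraph. -/
def IsSimplificationOf {d : ℕ} (k : ℕ) (S 𝒢 : Set (HG d)) : Prop :=
  ∀ m : ℕ, m ≤ k →
    ∀ g ∈ Submodule.span ℤ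
      {w : Fin d → ℤ | ∃ G ∈ 𝒢, ∃ X : Finset ℕ,
        X ⊆ verts G ∧ X.card = m ∧ w = weight X G},
      ∃ G' ∈ S, IsSimple k m g G'

/-- `S` is self-simplified: `S` is a simplification of `S` itself. -/
def SelfSimplified {d : ℕ} (k : ℕ) (S : Set (HG d)) : Prop :=
  IsSimplificationOf k S S

/-- `S` is simple for `𝒢`: `S` is self-simplified and a simplification of `𝒢`. -/
def SimpleFor {d : ℕ} (k : ℕ) (S 𝒢 : Set (HG d)) : Prop :=
  SelfSimplified k S ∧ IsSimplificationOf k S 𝒢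

section AuxSum

variable {d : ℕ}

lemma weight_eq_sum (X : Finset ℕ) (H : HG d) (S : Finset (Finset ℕ)) (hS : H.support ⊆ S) :
    weight X H = ∑ e ∈ S.filter (fun e => X ⊆ e), H e := by
  unfold weight
  refine Finset.sum_subset (Finset.filter_subset_filter _ hS) ?_
  intro e he hne
  by_contra h
  exact hne (Finset.mem_filter.mpr
    ⟨Finsupp.mem_support_iff.mpr h, (Finset.mem_filter.mp he).2⟩)

lemma weight_add (X : Finset ℕ) (H₁ H₂ : HG d) :
    weight X (H₁ + H₂) = weight X H₁ + weight X H₂ := by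
  classical
  have h1 : (H₁ + H₂).support ⊆ H₁.support ∪ H₂.support := Finsupp.support_add
  rw [weight_eq_sum X (H₁ + H₂) _ h1,
      weight_eq_sum X H₁ (H₁.support ∪ H₂.support) Finset.subset_union_left,
      weight_eq_sum X H₂ (H₁.support ∪ H₂.support) Finset.subset_union_right,
      ← Finset.sum_add_distrib]
  refine Finset.sum_congr rfl fun e _ => ?_
  simp [Finsupp.add_apply]

lemma verts_add_subset (H₁ H₂ : HG d) : verts (H₁ + H₂) ⊆ verts H₁ ∪ verts H₂ := by
  classical
  intro x hx
  rw [verts, Finset.mem_sup] at hx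
  obtain ⟨e, he, hxe⟩ := hx
  have := Finsupp.support_add he
  rw [Finset.mem_union] at this ⊢
  rcases this with h | h
  · exact Or.inl (Finset.mem_sup.mpr ⟨e, h, hxe⟩)
  · exact Or.inr (Finset.mem_sup.mpr ⟨e, h, hxe⟩)

lemma IsHG_add {k : ℕ} {H₁ H₂ : HG d} (h₁ : IsHG k H₁) (h₂ : IsHG k H₂) :
    IsHG k (H₁ + H₂) := by
  intro e he
  have := Finsupp.support_add he
  rw [Finset.mem_union] at this
  rcases this with h | h
  · exact h₁ e h
  · exact h₂ e h

end AuxSum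

section MapHG

variable {d : ℕ}

lemma img_inj (π : ℕ ≃ ℕ) : Function.Injective (fun e : Finset ℕ => e.image π) :=
  Finset.image_injective π.injective

noncomputable def mapHG (π : ℕ ≃ ℕ) (H : HG d) : HG d :=
  Finsupp.mapDomain (fun e => e.image π) H

lemma mapHG_apply (π : ℕ ≃ ℕ) (H : HG d) (e : Finset ℕ) :
    mapHG π H (e.image π) = H e :=
  Finsupp.mapDomain_apply (img_inj π) H e

lemma support_mapHG (π : ℕ ≃ ℕ) (H : HG d) :
    (mapHG π H).support = H.support.image (fun e => e.image π) :=
  Finsupp.mapDomain_support_of_injective (img_inj π) H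

lemma weight_mapHG (π : ℕ ≃ ℕ) (X : Finset ℕ) (H : HG d) :
    weight (X.image π) (mapHG π H) = weight X H := by
  classical
  unfold weight
  rw [support_mapHG, Finset.filter_image,
      Finset.sum_image (fun x _ y _ h => img_inj π h)]
  refine Finset.sum_congr ?_ fun e _ => mapHG_apply π H e
  congr 1
  ext e
  exact Finset.image_subset_image_iff π.injective

lemma verts_mapHG (π : ℕ ≃ ℕ) (H : HG d) :
    verts (mapHG π H) = (verts H).image π := by
  classical
  ext x
  simp only [verts, support_mapHG, Finset.mem_sup, Finset.mem_image, id]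
  constructor
  · rintro ⟨e, ⟨e₀, he₀, rfl⟩, hx⟩
    obtain ⟨y, hy, rfl⟩ := Finset.mem_image.mp hx
    exact ⟨y, ⟨e₀, he₀, hy⟩, rfl⟩
  · rintro ⟨y, ⟨e₀, he₀, hy⟩, rfl⟩
    exact ⟨e₀.image π, ⟨e₀, he₀, rfl⟩, Finset.mem_image_of_mem _ hy⟩

lemma IsHG_mapHG {k : ℕ} (π : ℕ ≃ ℕ) {H : HG d} (h : IsHG k H) :
    IsHG k (mapHG π H) := by
  intro e he
  rw [support_mapHG] at he
  obtain ⟨e₀, he₀, rfl⟩ := Finset.mem_image.mp he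
  rw [Finset.card_image_of_injective _ π.injective]
  exact h e₀ he₀

lemma mapHG_smul (π : ℕ ≃ ℕ) (c : ℤ) (H : HG d) :
    mapHG π (c • H) = c • mapHG π H :=
  Finsupp.mapDomain_smul c H

lemma mapHG_sum (π : ℕ ≃ ℕ) {ι : Type*} (s : Finset ι) (f : ι → HG d) :
    mapHG π (∑ i ∈ s, f i) = ∑ i ∈ s, mapHG π (f i) := by
  classical
  induction s using Finset.induction_on with
  | empty => simp [mapHG, Finsupp.mapDomain_zero]
  | insert _ _ h ih =>
      rw [Finset.sum_insert h, Finset.sum_insert h, ← ih]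
      exact Finsupp.mapDomain_add

lemma mapHG_mem_Eqs {G F : HG d} (hF : F ∈ Eqs {G}) (π : ℕ ≃ ℕ) :
    mapHG π F ∈ Eqs {G} := by
  obtain ⟨G₀, hG₀, σ, hσ⟩ := hF
  rw [Set.mem_singleton_iff] at hG₀
  subst hG₀
  refine ⟨G₀, rfl, σ.trans π, fun e => ?_⟩
  have h : e.image (σ.trans π) = (e.image σ).image π := by
    rw [Finset.image_image]; rfl
  rw [h, mapHG_apply]
  exact hσ e

lemma mapHG_mem_Zsum {G H : HG d} (hH : H ∈ Zsum (Eqs {G})) (π : ℕ ≃ ℕ) :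
    mapHG π H ∈ Zsum (Eqs {G}) := by
  obtain ⟨l, c, F, hF, rfl⟩ := hH
  refine ⟨l, c, fun i => mapHG π (F i), fun i => mapHG_mem_Eqs (hF i) π, ?_⟩
  rw [mapHG_sum]
  exact Finset.sum_congr rfl fun i _ => mapHG_smul π (c i) (F i)

end MapHG

section Span

variable {d : ℕ}

lemma zsum_eq_span (𝒢 : Set (HG d)) :
    Zsum 𝒢 = (Submodule.span ℤ 𝒢 : Submodule ℤ (HG d)) := by
  ext H
  constructor
  · rintro ⟨l, c, F, hF, rfl⟩
    exact sum_mem fun i _ => Submodule.smul_mem _ _ (Submodule.subset_span (hF i))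
  · intro hH
    rw [SetLike.mem_coe, Submodule.mem_span_set] at hH
    obtain ⟨c, hsupp, hsum⟩ := hH
    refine ⟨c.support.card, fun i => c (c.support.equivFin.symm i),
      fun i => (c.support.equivFin.symm i : HG d),
      fun i => hsupp (c.support.equivFin.symm i).2, ?_⟩
    rw [← hsum, Finsupp.sum]
    exact ((Equiv.sum_comp c.support.equivFin.symm
      (fun x : c.support => c (x : HG d) • (x : HG d))).trans
      (Finset.sum_coe_sort c.support (fun x => c x • x))).symm

end Span

section Perm

lemma exists_perm_extend (s : Finset ℕ) (f : ℕ → ℕ) (hinj : Set.InjOn f ↑s) :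
    ∃ π : ℕ ≃ ℕ, ∀ x ∈ s, π x = f x := by
  classical
  set t := s.image f with ht
  have hmem : ∀ x : (↑s : Set ℕ), f x ∈ (↑t : Set ℕ) := by
    rintro ⟨x, hx⟩
    simp only [Finset.coe_image, Set.mem_image, ht, Finset.mem_coe] at *
    exact ⟨x, hx, rfl⟩
  let F : (↑s : Set ℕ) → (↑t : Set ℕ) := fun x => ⟨f x, hmem x⟩
  have hFbij : Function.Bijective F := by
    constructor
    · intro x y h
      exact Subtype.ext (hinj x.2 y.2 (congrArg Subtype.val h))
    · rintro ⟨y, hy⟩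
      rw [Finset.mem_coe, ht, Finset.mem_image] at hy
      obtain ⟨x, hx, rfl⟩ := hy
      exact ⟨⟨x, hx⟩, rfl⟩
  let e₀ : (↑s : Set ℕ) ≃ (↑t : Set ℕ) := Equiv.ofBijective F hFbij
  have h1 : ((↑s : Set ℕ)ᶜ).Infinite := s.finite_toSet.infinite_compl
  have h2 : ((↑t : Set ℕ)ᶜ).Infinite := t.finite_toSet.infinite_compl
  have i1 : Infinite ((↑s : Set ℕ)ᶜ : Set ℕ) := h1.to_subtype
  have i2 : Infinite ((↑t : Set ℕ)ᶜ : Set ℕ) := h2.to_subtype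
  have : Nonempty (((↑s : Set ℕ)ᶜ : Set ℕ) ≃ (((↑t : Set ℕ)ᶜ : Set ℕ))) :=
    nonempty_equiv_of_countable
  obtain ⟨e₁⟩ := this
  obtain ⟨π, hπ⟩ := (Equiv.Set.compl e₀).symm e₁
  refine ⟨π, fun x hx => ?_⟩
  exact hπ ⟨x, hx⟩

end Perm

/-- **Lemma (sum of simple hypergraphs is simple).**
Let `G` be a `k`-hypergraph of dimension `d`, let `0 ≤ m ≤ k` and
`a, b ∈ ℤ^d`.  If there exist an `(m, a)`-simple `k`-hypergraph and an
`(m, b)`-simple `k`-hypergraph that are elements of `Σ_ℤ(Eqs({G}))`, then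
there exists an `(m, a+b)`-simple `k`-hypergraph that is an element of
`Σ_ℤ(Eqs({G}))`. -/
theorem simple_sum_is_simple
    (k d m : ℕ) (hk : 1 ≤ k) (hd : 1 ≤ d) (hm : m ≤ k)
    (G : HG d) (hG : IsHG k G) (a b : Fin d → ℤ)
    (ha : ∃ Sa ∈ Zsum (Eqs {G}), IsHG k Sa ∧ IsSimple k m a Sa)
    (hb : ∃ Sb ∈ Zsum (Eqs {G}), IsHG k Sb ∧ IsSimple k m b Sb) :
    ∃ Sc ∈ Zsum (Eqs {G}), IsHG k Sc ∧ IsSimple k m (a + b) Sc := by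
  classical
  obtain ⟨Sa, memA, hHGa, A, B, C, α, β, hαinj, hβinj, hA, hB, dAB, dAC, dBC, hCcard,
    hvertsA, hcanA, hzeroA, hltA⟩ := ha
  obtain ⟨Sb, memB, hHGb, A', B', C', α', β', hα'inj, hβ'inj, hA', hB', dA'B', dA'C', dB'C',
    hC'card, hvertsB, hcanB, hzeroB, hltB⟩ := hb
  set t : Finset ℕ := A ∪ B ∪ C with htdef
  set s' : Finset ℕ := A' ∪ B' ∪ C' with hs'def
  have hCC' : C'.card = C.card := by rw [hC'card, hCcard]
  let eC : {x // x ∈ C'} ≃ {x // x ∈ C} := Finset.equivOfCardEq hCC'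
  let f : ℕ → ℕ := fun x =>
    if hc : x ∈ C' then (eC ⟨x, hc⟩ : ℕ)
    else if hx : ∃ i, α' i = x then α hx.choose
    else if hx : ∃ i, β' i = x then β hx.choose
    else x
  -- memberships
  have hmemA : ∀ i, α i ∈ A := fun i => by
    rw [hA]; exact Finset.mem_image_of_mem _ (Finset.mem_univ i)
  have hmemB : ∀ i, β i ∈ B := fun i => by
    rw [hB]; exact Finset.mem_image_of_mem _ (Finset.mem_univ i)
  have hmemA' : ∀ i, α' i ∈ A' := fun i => by
    rw [hA']; exact Finset.mem_image_of_mem _ (Finset.mem_univ i)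
  have hmemB' : ∀ i, β' i ∈ B' := fun i => by
    rw [hB']; exact Finset.mem_image_of_mem _ (Finset.mem_univ i)
  have hαs' : ∀ i, α' i ∈ s' :=
    fun i => Finset.mem_union_left _ (Finset.mem_union_left _ (hmemA' i))
  have hβs' : ∀ i, β' i ∈ s' :=
    fun i => Finset.mem_union_left _ (Finset.mem_union_right _ (hmemB' i))
  -- values of f
  have hfα : ∀ i, f (α' i) = α i := by
    intro i
    have hc : α' i ∉ C' := fun h => (Finset.disjoint_left.mp dA'C') (hmemA' i) h
    have hex : ∃ j, α' j = α' i := ⟨i, rfl⟩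
    simp only [f, dif_neg hc, dif_pos hex]
    congr 1
    exact hα'inj hex.choose_spec
  have hfβ : ∀ i, f (β' i) = β i := by
    intro i
    have hc : β' i ∉ C' := fun h => (Finset.disjoint_left.mp dB'C') (hmemB' i) h
    have hex2 : ¬ ∃ j, α' j = β' i := by
      rintro ⟨j, hj⟩
      have h2 : α' j ∈ B' := by rw [hj]; exact hmemB' i
      exact (Finset.disjoint_left.mp dA'B') (hmemA' j) h2
    have hex : ∃ j, β' j = β' i := ⟨i, rfl⟩
    simp only [f, dif_neg hc, dif_neg hex2, dif_pos hex]
    congr 1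
    exact hβ'inj hex.choose_spec
  -- classification of f on s'
  have hclass : ∀ x ∈ s', (∃ i, α' i = x ∧ f x = α i) ∨ (∃ i, β' i = x ∧ f x = β i) ∨
      (∃ hc : x ∈ C', f x = (eC ⟨x, hc⟩ : ℕ)) := by
    intro x hx
    rw [hs'def, Finset.mem_union, Finset.mem_union] at hx
    rcases hx with (hx | hx) | hx
    · rw [hA', Finset.mem_image] at hx
      obtain ⟨i, _, rfl⟩ := hx
      exact Or.inl ⟨i, rfl, hfα i⟩
    · rw [hB', Finset.mem_image] at hx
      obtain ⟨i, _, rfl⟩ := hx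
      exact Or.inr (Or.inl ⟨i, rfl, hfβ i⟩)
    · exact Or.inr (Or.inr ⟨hx, by simp only [f, dif_pos hx]⟩)
  have hinj : Set.InjOn f ↑s' := by
    intro x hx y hy hxy
    rw [Finset.mem_coe] at hx hy
    rcases hclass x hx with ⟨i, rfl, hfx⟩ | ⟨i, rfl, hfx⟩ | ⟨hxC, hfx⟩ <;>
      rcases hclass y hy with ⟨j, rfl, hfy⟩ | ⟨j, rfl, hfy⟩ | ⟨hyC, hfy⟩
    · rw [hfx, hfy] at hxy
      rw [hαinj hxy]
    · rw [hfx, hfy] at hxy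
      exact absurd ((hxy ▸ hmemA i) : β j ∈ A) (fun h => (Finset.disjoint_left.mp dAB) h (hmemB j))
    · rw [hfx, hfy] at hxy
      exact absurd ((hxy ▸ hmemA i) : (eC ⟨y, hyC⟩ : ℕ) ∈ A)
        (fun h => (Finset.disjoint_left.mp dAC) h (eC ⟨y, hyC⟩).2)
    · rw [hfx, hfy] at hxy
      exact absurd ((hxy ▸ hmemB i) : α j ∈ B)
        (fun h => (Finset.disjoint_left.mp dAB) (hmemA j) h)
    · rw [hfx, hfy] at hxy
      rw [hβinj hxy]
    · rw [hfx, hfy] at hxy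
      exact absurd ((hxy ▸ hmemB i) : (eC ⟨y, hyC⟩ : ℕ) ∈ B)
        (fun h => (Finset.disjoint_left.mp dBC) h (eC ⟨y, hyC⟩).2)
    · rw [hfx, hfy] at hxy
      exact absurd ((hxy ▸ (eC ⟨x, hxC⟩).2) : α j ∈ C)
        (fun h => (Finset.disjoint_left.mp dAC) (hmemA j) h)
    · rw [hfx, hfy] at hxy
      exact absurd ((hxy ▸ (eC ⟨x, hxC⟩).2) : β j ∈ C)
        (fun h => (Finset.disjoint_left.mp dBC) (hmemB j) h)
    · rw [hfx, hfy] at hxy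
      have := eC.injective (Subtype.ext hxy)
      exact congrArg Subtype.val this
  -- image of f
  have himg_sub : s'.image f ⊆ t := by
    intro y hy
    obtain ⟨x, hx, rfl⟩ := Finset.mem_image.mp hy
    rcases hclass x hx with ⟨i, _, hfx⟩ | ⟨i, _, hfx⟩ | ⟨hc, hfx⟩
    · rw [hfx]; exact Finset.mem_union_left _ (Finset.mem_union_left _ (hmemA i))
    · rw [hfx]; exact Finset.mem_union_left _ (Finset.mem_union_right _ (hmemB i))
    · rw [hfx]; exact Finset.mem_union_right _ (eC ⟨x, hc⟩).2
  have hcardA : A.card = m := by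
    rw [hA, Finset.card_image_of_injective _ hαinj]; simp
  have hcardB : B.card = m := by
    rw [hB, Finset.card_image_of_injective _ hβinj]; simp
  have hcardA' : A'.card = m := by
    rw [hA', Finset.card_image_of_injective _ hα'inj]; simp
  have hcardB' : B'.card = m := by
    rw [hB', Finset.card_image_of_injective _ hβ'inj]; simp
  have hcards' : s'.card = t.card := by
    have d1 : Disjoint (A' ∪ B') C' := Finset.disjoint_union_left.mpr ⟨dA'C', dB'C'⟩
    have d2 : Disjoint (A ∪ B) C := Finset.disjoint_union_left.mpr ⟨dAC, dBC⟩
    rw [hs'def, htdef, Finset.card_union_of_disjoint d1, Finset.card_union_of_disjoint d2,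
        Finset.card_union_of_disjoint dA'B', Finset.card_union_of_disjoint dAB,
        hcardA, hcardA', hcardB, hcardB', hCcard, hC'card]
  have himg : s'.image f = t := by
    apply Finset.eq_of_subset_of_card_le himg_sub
    rw [Finset.card_image_of_injOn hinj]
    exact hcards'.ge
  obtain ⟨π, hπ⟩ := exists_perm_extend s' f hinj
  have himgπ : s'.image ⇑π = t := by
    rw [Finset.image_congr (fun x hx => hπ x hx), himg]
  -- transport of canonical sets
  have key : ∀ χ : Fin m → Bool,
      (Finset.image (fun i => if χ i then β' i else α' i) Finset.univ).image ⇑π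
        = Finset.image (fun i => if χ i then β i else α i) Finset.univ := by
    intro χ
    rw [Finset.image_image]
    apply Finset.image_congr
    intro i _
    show π (if χ i then β' i else α' i) = if χ i then β i else α i
    by_cases h : χ i
    · simp only [if_pos h]
      rw [hπ _ (hβs' i), hfβ]
    · simp only [if_neg h]
      rw [hπ _ (hαs' i), hfα]
  have himage_symm : ∀ X : Finset ℕ, (X.image ⇑π.symm).image ⇑π = X := by
    intro X
    rw [Finset.image_image]
    simp
  have hweight_back : ∀ X : Finset ℕ, weight X (mapHG π Sb) = weight (X.image ⇑π.symm) Sb := by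
    intro X
    conv_lhs => rw [← himage_symm X]
    rw [weight_mapHG]
  have hback_sub : ∀ X : Finset ℕ, X ⊆ t → X.image ⇑π.symm ⊆ s' := by
    intro X hX y hy
    obtain ⟨u, hu, rfl⟩ := Finset.mem_image.mp hy
    have hu' : u ∈ t := hX hu
    rw [← himgπ, Finset.mem_image] at hu'
    obtain ⟨v, hv, rfl⟩ := hu'
    simpa using hv
  refine ⟨Sa + mapHG π Sb, ?_, IsHG_add hHGa (IsHG_mapHG π hHGb), ?_⟩
  · rw [zsum_eq_span]
    have h1 : Sa ∈ Submodule.span ℤ (Eqs {G}) := by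
      rw [← SetLike.mem_coe, ← zsum_eq_span]; exact memA
    have h2 : mapHG π Sb ∈ Submodule.span ℤ (Eqs {G}) := by
      rw [← SetLike.mem_coe, ← zsum_eq_span]; exact mapHG_mem_Zsum memB π
    exact Submodule.add_mem _ h1 h2
  refine ⟨A, B, C, α, β, hαinj, hβinj, hA, hB, dAB, dAC, dBC, hCcard, ?_, ?_, ?_, ?_⟩
  · -- verts
    intro x hx
    rcases Finset.mem_union.mp (verts_add_subset Sa (mapHG π Sb) hx) with h | h
    · exact hvertsA h
    · rw [verts_mapHG] at h
      obtain ⟨y, hy, rfl⟩ := Finset.mem_image.mp h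
      have hy' : y ∈ s' := hvertsB hy
      rw [hπ y hy']
      have hmem : f y ∈ s'.image f := Finset.mem_image_of_mem f hy'
      rw [himg, htdef] at hmem
      exact hmem
  · -- canonical weights
    intro χ
    have e2 : weight (Finset.image (fun i => if χ i then β i else α i) Finset.univ) (mapHG π Sb)
        = ((-1 : ℤ) ^ (Finset.univ.filter (fun i => χ i = true)).card) • b := by
      rw [← key χ, weight_mapHG]
      exact hcanB χ
    rw [weight_add, hcanA χ, e2, ← smul_add]
  · -- noncanonical m-sets
    intro X hXsub hXcard hXnot
    have z2 : weight X (mapHG π Sb) = 0 := by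
      rw [hweight_back X]
      refine hzeroB _ (hback_sub X hXsub) ?_ ?_
      · rw [Finset.card_image_of_injective _ π.symm.injective, hXcard]
      · intro χ hEq
        apply hXnot χ
        rw [← himage_symm X, hEq, key χ]
    rw [weight_add, hzeroA X hXsub hXcard hXnot, z2, add_zero]
  · -- small sets
    intro X hXsub hXcard
    have z2 : weight X (mapHG π Sb) = 0 := by
      rw [hweight_back X]
      refine hltB _ (hback_sub X hXsub) ?_
      rw [Finset.card_image_of_injective _ π.symm.injective]
      exact hXcard
    rw [weight_add, hltA X hXsub hXcard, z2, add_zero]
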